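/- For all integers m and n, setting x = 4(7n^2-12mn-18m^2)(17n^2+30mn+18m^2)(23n^2+48mn+18m^2), y = 3(7n^2-12mn-18m^2)(17n^2+30mn+18m^2)(23n^2+48mn+18m^2), z = 48n(n+3m)(4n+3m)(5n+6m)(17n^2+30mn+18m^2), a = 5(7n^2-12mn-18m^2)(17n^2+30mn+18m^2)(23n^2+48mn+18m^2), b = 4(17n^2+30mn+18m^2)^3, c1 = 9(3n^2+8mn+6m^2)(23n^2+48mn+18m^2)(41n^2+48mn+18m^2), c2 = 3(7n^2-12mn-18m^2)(11n^2+12mn+18m^2)(19n^2+36mn+18m^2), d1 = (23n^2+48mn+18m^2)(1205n^4+3912mn^3+5940m^2n^2+4752m^3n+1620m^4), d2 = (7n^2-12mn-18m^2)(1685n^4+6288mn^3+9180m^2n^2+6048m^3n+1620m^4), all seven equations hold: x^2+y^2=a^2, x^2+z^2=b^2, x^2+c1^2=d1^2, x^2+c2^2=d2^2, 2y^2+2z^2=c1^2+c2^2, 2y^2+2b^2=d1^2+d2^2, and 2a^2+2z^2=d1^2+d2^2. -/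
import Mathlib


theorem stmt_10 (m n x y z a b c1 c2 d1 d2 : ℤ)
    (hx : x = 4*(7*n^2-12*m*n-18*m^2)*(17*n^2+30*m*n+18*m^2)*(23*n^2+48*m*n+18*m^2))
    (hy : y = 3*(7*n^2-12*m*n-18*m^2)*(17*n^2+30*m*n+18*m^2)*(23*n^2+48*m*n+18*m^2))
    (hz : z = 48*n*(n+3*m)*(4*n+3*m)*(5*n+6*m)*(17*n^2+30*m*n+18*m^2))
    (ha : a = 5*(7*n^2-12*m*n-18*m^2)*(17*n^2+30*m*n+18*m^2)*(23*n^2+48*m*n+18*m^2))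
    (hb : b = 4*(17*n^2+30*m*n+18*m^2)^3)
    (hc1 : c1 = 9*(3*n^2+8*m*n+6*m^2)*(23*n^2+48*m*n+18*m^2)*(41*n^2+48*m*n+18*m^2))
    (hc2 : c2 = 3*(7*n^2-12*m*n-18*m^2)*(11*n^2+12*m*n+18*m^2)*(19*n^2+36*m*n+18*m^2))
    (hd1 : d1 = (23*n^2+48*m*n+18*m^2)*(1205*n^4+3912*m*n^3+5940*m^2*n^2+4752*m^3*n+1620*m^4))
    (hd2 : d2 = (7*n^2-12*m*n-18*m^2)*(1685*n^4+6288*m*n^3+9180*m^2*n^2+6048*m^3*n+1620*m^4)) :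
    x^2 + y^2 = a^2 ∧ x^2 + z^2 = b^2 ∧ x^2 + c1^2 = d1^2 ∧ x^2 + c2^2 = d2^2 ∧ 2*y^2 + 2*z^2 = c1^2 + c2^2 ∧ 2*y^2 + 2*b^2 = d1^2 + d2^2 ∧ 2*a^2 + 2*z^2 = d1^2 + d2^2 := by
  subst hx hy hz ha hb hc1 hc2 hd1 hd2
  refine ⟨by ring, by ring, by ring, by ring, by ring, by ring, by ring⟩
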